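/- Let Y be a real Hilbert space, h : Y → ℝ differentiable with gradient ∇h, and H : Y → (Y →L[ℝ] Y) a Hessian field of h (for every y, ∇h has Fréchet derivative H(y) at y) such that each H(y) is self-adjoint, μ‖v‖² ≤ ⟨H(y)v, v⟩ ≤ L_{g,1}‖v‖² for all y, v (with 0 < μ ≤ L_{g,1}), and ‖H(y) − H(y')‖_op ≤ L_{g,2}‖y − y'‖. Let y* satisfy ∇h(y*) = 0, fix y ∈ Y, write H := H(y), and let 0 < γ ≤ 1/L_{g,1}. Define v₀ := γ∇h(y) and v_{t+1} := v_t − γ(H(v_t) − ∇h(y)) for t ≥ 0. Then for every natural number T: ‖y − v_T − y*‖ ≤ (1 − μγ)^T · √(1 − μγ) · ‖y − y*‖ + (L_{g,2}/(2μ)) ‖y − y*‖². -/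

import Mathlib

open scoped RealInnerProductSpace

section aux
variable {Y : Type*} [NormedAddCommGroup Y] [InnerProductSpace ℝ Y]

/-- Cauchy–Schwarz for the positive semidefinite form `⟪B ·, ·⟫`. -/
lemma nbo_cs (B : Y →L[ℝ] Y) (hsym : ∀ v w : Y, ⟪B v, w⟫ = ⟪v, B w⟫)
    (hpos : ∀ v : Y, 0 ≤ ⟪B v, v⟫) (x v : Y) :
    ⟪B x, v⟫ ^ 2 ≤ ⟪B x, x⟫ * ⟪B v, v⟫ := by
  have hs : ⟪B v, x⟫ = ⟪B x, v⟫ := by rw [hsym v x, real_inner_comm]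
  have key : ∀ t : ℝ, 0 ≤ ⟪B v, v⟫ * (t * t) + (2 * ⟪B x, v⟫) * t + ⟪B x, x⟫ := by
    intro t
    have h0 := hpos (x + t • v)
    have hexp : ⟪B (x + t • v), x + t • v⟫
        = ⟪B v, v⟫ * (t * t) + (2 * ⟪B x, v⟫) * t + ⟪B x, x⟫ := by
      rw [map_add, map_smul]
      simp only [inner_add_left, inner_add_right, real_inner_smul_left,
        real_inner_smul_right, hs]
      ring
    linarith [hexp ▸ h0]
  have hd := discrim_le_zero key
  rw [discrim] at hd
  nlinarith [hd]

/-- Key operator inequality: `‖B v‖² ≤ c ⟪B v, v⟫` for `0 ≤ B ≤ c·I` self-adjoint. -/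
lemma nbo_key (B : Y →L[ℝ] Y) (hsym : ∀ v w : Y, ⟪B v, w⟫ = ⟪v, B w⟫)
    (hpos : ∀ v : Y, 0 ≤ ⟪B v, v⟫) {c : ℝ} (hc : 0 ≤ c)
    (hub : ∀ v : Y, ⟪B v, v⟫ ≤ c * ‖v‖ ^ 2) (v : Y) :
    ‖B v‖ ^ 2 ≤ c * ⟪B v, v⟫ := by
  have h1 := nbo_cs B hsym hpos v (B v)
  rw [real_inner_self_eq_norm_sq] at h1
  have h2 := hub (B v)
  by_cases hz : ‖B v‖ = 0
  · rw [hz]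
    exact le_trans (by norm_num) (mul_nonneg hc (hpos v))
  · have hzpos : 0 < ‖B v‖ ^ 2 := by positivity
    nlinarith [hpos v, hpos (B v)]

/-- Operator norm bound: `‖B v‖ ≤ c ‖v‖` for `0 ≤ B ≤ c·I` self-adjoint. -/
lemma nbo_op (B : Y →L[ℝ] Y) (hsym : ∀ v w : Y, ⟪B v, w⟫ = ⟪v, B w⟫)
    (hpos : ∀ v : Y, 0 ≤ ⟪B v, v⟫) {c : ℝ} (hc : 0 ≤ c)
    (hub : ∀ v : Y, ⟪B v, v⟫ ≤ c * ‖v‖ ^ 2) (v : Y) :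
    ‖B v‖ ≤ c * ‖v‖ := by
  have h1 := nbo_key B hsym hpos hc hub v
  have h2 : ⟪B v, v⟫ ≤ ‖B v‖ * ‖v‖ := real_inner_le_norm _ _
  by_cases hz : ‖B v‖ = 0
  · rw [hz]; positivity
  · have hzpos : 0 < ‖B v‖ := lt_of_le_of_ne (norm_nonneg _) (Ne.symm hz)
    nlinarith

/-- Quadratic Taylor remainder bound for a gradient with Lipschitz Hessian. -/
lemma nbo_taylor (gradh : Y → Y) (Hf : Y → Y →L[ℝ] Y) (Lg2 : ℝ)
    (hHess : ∀ y : Y, HasFDerivAt gradh (Hf y) y)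
    (hLip : ∀ y y' : Y, ‖Hf y - Hf y'‖ ≤ Lg2 * ‖y - y'‖) (a b : Y) :
    ‖Hf b (b - a) - (gradh b - gradh a)‖ ≤ Lg2 / 2 * ‖b - a‖ ^ 2 := by
  set e := b - a with he
  set C := Lg2 * ‖e‖ ^ 2 with hC
  set f : ℝ → Y := fun s => gradh (a + s • e) - s • (Hf b e) - gradh a with hf
  set B : ℝ → ℝ := fun s => C * (s - s ^ 2 / 2) with hB
  have hf' : ∀ s : ℝ, HasDerivAt f (Hf (a + s • e) e - Hf b e) s := by
    intro s
    have hg : HasDerivAt (fun s : ℝ => a + s • e) e s := by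
      simpa using ((hasDerivAt_id s).smul_const e).const_add a
    have h1 : HasDerivAt (fun s : ℝ => gradh (a + s • e)) (Hf (a + s • e) e) s := by
      exact (hHess (a + s • e)).comp_hasDerivAt s hg
    have h2 : HasDerivAt (fun s : ℝ => s • (Hf b e)) (Hf b e) s := by
      simpa using (hasDerivAt_id s).smul_const (Hf b e)
    exact (h1.sub h2).sub_const (gradh a)
  have hB' : ∀ s : ℝ, HasDerivAt B (C * (1 - s)) s := by
    intro s
    have : HasDerivAt (fun s : ℝ => s - s ^ 2 / 2) (1 - 2 * s ^ 1 / 2) s :=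
      (hasDerivAt_id s).sub ((hasDerivAt_pow 2 s).div_const 2)
    have := this.const_mul C
    refine this.congr_deriv ?_
    ring
  have bound : ∀ s ∈ Set.Ico (0 : ℝ) 1, ‖Hf (a + s • e) e - Hf b e‖ ≤ C * (1 - s) := by
    intro s hs
    have h1 : Hf (a + s • e) e - Hf b e = (Hf (a + s • e) - Hf b) e := by
      simp [ContinuousLinearMap.sub_apply]
    rw [h1]
    have h2 : ‖(Hf (a + s • e) - Hf b) e‖ ≤ ‖Hf (a + s • e) - Hf b‖ * ‖e‖ :=
      ContinuousLinearMap.le_opNorm _ _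
    have h3 : ‖Hf (a + s • e) - Hf b‖ ≤ Lg2 * ‖a + s • e - b‖ := hLip _ _
    have h4 : a + s • e - b = (s - 1) • e := by
      rw [he]; rw [sub_smul, one_smul]; abel
    have h5 : ‖a + s • e - b‖ = (1 - s) * ‖e‖ := by
      rw [h4, norm_smul, Real.norm_eq_abs, abs_of_nonpos (by linarith [hs.2]), neg_sub]
    have hnn : 0 ≤ ‖e‖ := norm_nonneg _
    calc ‖(Hf (a + s • e) - Hf b) e‖ ≤ (Lg2 * ((1 - s) * ‖e‖)) * ‖e‖ := by
          refine h2.trans (mul_le_mul_of_nonneg_right (h3.trans_eq (by rw [h5])) hnn)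
      _ = C * (1 - s) := by rw [hC]; ring
  have hmain := image_norm_le_of_norm_deriv_right_le_deriv_boundary
    (f := f) (f' := fun s => Hf (a + s • e) e - Hf b e) (a := 0) (b := 1)
    (fun s _ => (hf' s).continuousAt.continuousWithinAt)
    (fun s _ => (hf' s).hasDerivWithinAt)
    (B := B) (B' := fun s => C * (1 - s))
    (by simp [hf, hB]) (fun s => hB' s) bound
  have h1 : (1 : ℝ) ∈ Set.Icc (0 : ℝ) 1 := by norm_num
  have := hmain h1
  rw [hf, hB] at this
  simp only [one_smul] at this
  have hab : a + e = b := by rw [he]; abel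
  rw [hab] at this
  have heq : ‖gradh b - Hf b e - gradh a‖ = ‖Hf b e - (gradh b - gradh a)‖ := by
    rw [← norm_neg]; congr 1; abel
  rw [heq] at this

  calc ‖Hf b e - (gradh b - gradh a)‖ ≤ C * (1 - 1 ^ 2 / 2) := this
    _ = Lg2 / 2 * ‖e‖ ^ 2 := by rw [hC]; ring
end aux


/-- Eq. (9eq) in the proof of Lemma C.2: the inner gradient-descent loop of NBO-GD,
initialized at `v₋₁ = 0` (so `v₀ = γ∇h(y)`), brings `y − v_T` within a contracted distance
of the lower-level solution `y*`, up to a quadratic Newton-type remainder. -/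
theorem stmt_8
    {Y : Type*} [NormedAddCommGroup Y] [InnerProductSpace ℝ Y] [CompleteSpace Y]
    (h : Y → ℝ) (gradh : Y → Y) (Hf : Y → Y →L[ℝ] Y)
    (μ Lg1 Lg2 γ : ℝ) (hμ : 0 < μ) (hμL : μ ≤ Lg1)
    (hgrad : ∀ y : Y, HasGradientAt h (gradh y) y)
    (hHess : ∀ y : Y, HasFDerivAt gradh (Hf y) y)
    (hsym : ∀ y v w : Y, ⟪Hf y v, w⟫ = ⟪v, Hf y w⟫)
    (hlb : ∀ y v : Y, μ * ‖v‖ ^ 2 ≤ ⟪Hf y v, v⟫)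
    (hub : ∀ y v : Y, ⟪Hf y v, v⟫ ≤ Lg1 * ‖v‖ ^ 2)
    (hLip : ∀ y y' : Y, ‖Hf y - Hf y'‖ ≤ Lg2 * ‖y - y'‖)
    (ystar : Y) (hstar : gradh ystar = 0)
    (y : Y) (hγ : 0 < γ) (hγle : γ ≤ 1 / Lg1)
    (v : ℕ → Y)
    (hv0 : v 0 = γ • gradh y)
    (hvrec : ∀ t : ℕ, v (t + 1) = v t - γ • (Hf y (v t) - gradh y)) :
    ∀ T : ℕ,
      ‖y - v T - ystar‖
        ≤ (1 - μ * γ) ^ T * Real.sqrt (1 - μ * γ) * ‖y - ystar‖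
          + Lg2 / (2 * μ) * ‖y - ystar‖ ^ 2 := by
  have hLg1 : 0 < Lg1 := hμ.trans_le hμL
  have hγL : γ * Lg1 ≤ 1 := by
    rw [le_div_iff₀ hLg1] at hγle; linarith
  set c : ℝ := 1 - μ * γ with hcdef
  have hc0 : 0 ≤ c := by nlinarith
  have hc1 : c < 1 := by nlinarith
  set A : Y →L[ℝ] Y := 1 - γ • Hf y with hAdef
  have hA_apply : ∀ z : Y, A z = z - γ • Hf y z := by
    intro z
    simp [hAdef, ContinuousLinearMap.sub_apply, ContinuousLinearMap.smul_apply,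
      ContinuousLinearMap.one_apply]
  have hAsym : ∀ v w : Y, ⟪A v, w⟫ = ⟪v, A w⟫ := by
    intro v w
    simp only [hA_apply, inner_sub_left, inner_sub_right, real_inner_smul_left,
      real_inner_smul_right, hsym y]
  have hApos : ∀ v : Y, 0 ≤ ⟪A v, v⟫ := by
    intro v
    rw [hA_apply, inner_sub_left, real_inner_smul_left, real_inner_self_eq_norm_sq]
    nlinarith [hub y v, sq_nonneg ‖v‖, hγ.le]
  have hAub : ∀ v : Y, ⟪A v, v⟫ ≤ c * ‖v‖ ^ 2 := by
    intro v
    rw [hA_apply, inner_sub_left, real_inner_smul_left, real_inner_self_eq_norm_sq]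
    nlinarith [hlb y v, hγ.le]
  have hAnorm : ∀ v : Y, ‖A v‖ ≤ c * ‖v‖ := nbo_op A hAsym hApos hc0 hAub
  -- symmetry of powers
  have hPsym : ∀ (k : ℕ) (v w : Y), ⟪(A ^ k) v, w⟫ = ⟪v, (A ^ k) w⟫ := by
    intro k
    induction k with
    | zero => intro v w; simp
    | succ k ih =>
      intro v w
      calc ⟪(A ^ (k + 1)) v, w⟫ = ⟪(A ^ k) (A v), w⟫ := by
            rw [pow_succ, ContinuousLinearMap.mul_apply]
        _ = ⟪A v, (A ^ k) w⟫ := ih _ _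
        _ = ⟪v, A ((A ^ k) w)⟫ := hAsym _ _
        _ = ⟪v, (A ^ (k + 1)) w⟫ := by
            rw [pow_succ', ContinuousLinearMap.mul_apply]
  -- norms of powers
  have hPnorm : ∀ (k : ℕ) (v : Y), ‖(A ^ k) v‖ ≤ c ^ k * ‖v‖ := by
    intro k
    induction k with
    | zero => intro v; simp
    | succ k ih =>
      intro v
      rw [pow_succ', ContinuousLinearMap.mul_apply]
      calc ‖A ((A ^ k) v)‖ ≤ c * ‖(A ^ k) v‖ := hAnorm _
        _ ≤ c * (c ^ k * ‖v‖) := mul_le_mul_of_nonneg_left (ih v) hc0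
        _ = c ^ (k + 1) * ‖v‖ := by ring
  -- positivity of powers
  have hPpos : ∀ (k : ℕ) (v : Y), 0 ≤ ⟪(A ^ k) v, v⟫ := by
    intro k v
    rcases Nat.even_or_odd k with ⟨m, hm⟩ | ⟨m, hm⟩
    · have : A ^ k = A ^ m * A ^ m := by rw [hm, ← pow_add]
      rw [this, ContinuousLinearMap.mul_apply, hPsym m]
      exact real_inner_self_nonneg
    · have hk : k = m + (1 + m) := by omega
      have : A ^ k = A ^ m * (A * A ^ m) := by
        rw [hk, pow_add, pow_add, pow_one]
      rw [this, ContinuousLinearMap.mul_apply, hPsym m, ContinuousLinearMap.mul_apply]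
      exact hApos _
  set e : Y := y - ystar with hedef
  set w : Y := Hf y e - gradh y with hwdef
  -- closed form for the iterates
  have hu : ∀ T : ℕ, y - v T - ystar
      = (A ^ (T + 1)) e + γ • ((∑ k ∈ Finset.range (T + 1), A ^ k) w) := by
    intro T
    induction T with
    | zero =>
      rw [hv0]
      simp only [zero_add, Finset.range_one, Finset.sum_singleton, pow_zero, pow_one,
        ContinuousLinearMap.one_apply, hA_apply, hwdef, hedef]
      module
    | succ T ih =>
      have hvT : v T = y - ystar - ((A ^ (T + 1)) e
          + γ • ((∑ k ∈ Finset.range (T + 1), A ^ k) w)) := by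
        rw [← ih]; abel
      have hpow : (A ^ (T + 1 + 1)) e = A ((A ^ (T + 1)) e) := by
        rw [pow_succ', ContinuousLinearMap.mul_apply]
      have hsum : (∑ k ∈ Finset.range (T + 1 + 1), A ^ k) w
          = A ((∑ k ∈ Finset.range (T + 1), A ^ k) w) + w := by
        rw [geom_sum_succ, ContinuousLinearMap.add_apply, ContinuousLinearMap.mul_apply,
          ContinuousLinearMap.one_apply]
      rw [hvrec T, hvT, hpow, hsum]
      simp only [map_sub, map_add, map_smul, hA_apply, hwdef, hedef]
      module
  -- the summed operator
  intro T
  set S : Y →L[ℝ] Y := ∑ k ∈ Finset.range (T + 1), A ^ k with hSdef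
  have hSsym : ∀ v w : Y, ⟪(γ • S) v, w⟫ = ⟪v, (γ • S) w⟫ := by
    intro v w
    simp only [ContinuousLinearMap.smul_apply, real_inner_smul_left, real_inner_smul_right,
      hSdef, ContinuousLinearMap.sum_apply, sum_inner, inner_sum]
    congr 1
    exact Finset.sum_congr rfl fun k _ => hPsym k v w
  have hSpos : ∀ v : Y, 0 ≤ ⟪(γ • S) v, v⟫ := by
    intro v
    simp only [ContinuousLinearMap.smul_apply, real_inner_smul_left, hSdef,
      ContinuousLinearMap.sum_apply, sum_inner]
    exact mul_nonneg hγ.le (Finset.sum_nonneg fun k _ => hPpos k v)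
  have hμγ : 0 < μ * γ := mul_pos hμ hγ
  have hgeom : ∑ k ∈ Finset.range (T + 1), c ^ k ≤ 1 / (μ * γ) := by
    have hμγc : μ * γ = 1 - c := by rw [hcdef]; ring
    have hpow : 0 ≤ c ^ (T + 1) := pow_nonneg hc0 _
    rw [le_div_iff₀ hμγ]
    have hsum_eq : (∑ k ∈ Finset.range (T + 1), c ^ k) * (μ * γ) = 1 - c ^ (T + 1) := by
      rw [hμγc]
      linear_combination (-1 : ℝ) * geom_sum_mul c (T + 1)
    rw [hsum_eq]
    linarith
  have hSub : ∀ v : Y, ⟪(γ • S) v, v⟫ ≤ (1 / μ) * ‖v‖ ^ 2 := by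
    intro v
    simp only [ContinuousLinearMap.smul_apply, real_inner_smul_left, hSdef,
      ContinuousLinearMap.sum_apply, sum_inner]
    have h1 : ∑ k ∈ Finset.range (T + 1), ⟪(A ^ k) v, v⟫
        ≤ ∑ k ∈ Finset.range (T + 1), c ^ k * ‖v‖ ^ 2 := by
      refine Finset.sum_le_sum fun k _ => ?_
      calc ⟪(A ^ k) v, v⟫ ≤ ‖(A ^ k) v‖ * ‖v‖ := real_inner_le_norm _ _
        _ ≤ (c ^ k * ‖v‖) * ‖v‖ :=
            mul_le_mul_of_nonneg_right (hPnorm k v) (norm_nonneg _)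
        _ = c ^ k * ‖v‖ ^ 2 := by ring
    rw [← Finset.sum_mul] at h1
    have h2 : (∑ k ∈ Finset.range (T + 1), c ^ k) * ‖v‖ ^ 2 ≤ (1 / (μ * γ)) * ‖v‖ ^ 2 :=
      mul_le_mul_of_nonneg_right hgeom (sq_nonneg _)
    have h3 : γ * ((1 / (μ * γ)) * ‖v‖ ^ 2) = (1 / μ) * ‖v‖ ^ 2 := by
      field_simp
    calc γ * ∑ k ∈ Finset.range (T + 1), ⟪(A ^ k) v, v⟫
        ≤ γ * ((1 / (μ * γ)) * ‖v‖ ^ 2) :=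
          mul_le_mul_of_nonneg_left (h1.trans h2) hγ.le
      _ = (1 / μ) * ‖v‖ ^ 2 := h3
  have hSnorm : ‖(γ • S) w‖ ≤ (1 / μ) * ‖w‖ :=
    nbo_op (γ • S) hSsym hSpos (by positivity) hSub w
  -- Taylor bound for w
  have hwbound : ‖w‖ ≤ Lg2 / 2 * ‖e‖ ^ 2 := by
    have := nbo_taylor gradh Hf Lg2 hHess hLip ystar y
    rw [hstar] at this
    simpa [hwdef, hedef] using this
  -- first term
  have hAe : ‖A e‖ ≤ Real.sqrt c * ‖e‖ := by
    have h1 : ‖A e‖ ^ 2 ≤ c * ⟪A e, e⟫ := nbo_key A hAsym hApos hc0 hAub e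
    have h2 : ⟪A e, e⟫ ≤ ‖e‖ ^ 2 := by
      have := hAub e
      nlinarith [sq_nonneg ‖e‖]
    have h3 : ‖A e‖ ^ 2 ≤ c * ‖e‖ ^ 2 :=
      h1.trans (mul_le_mul_of_nonneg_left h2 hc0)
    have h4 := Real.sqrt_le_sqrt h3
    rwa [Real.sqrt_sq (norm_nonneg _), Real.sqrt_mul hc0, Real.sqrt_sq (norm_nonneg _)] at h4
  have hfirst : ‖(A ^ (T + 1)) e‖ ≤ c ^ T * Real.sqrt c * ‖e‖ := by
    have h1 : (A ^ (T + 1)) e = (A ^ T) (A e) := by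
      rw [pow_succ, ContinuousLinearMap.mul_apply]
    rw [h1]
    calc ‖(A ^ T) (A e)‖ ≤ c ^ T * ‖A e‖ := hPnorm T (A e)
      _ ≤ c ^ T * (Real.sqrt c * ‖e‖) :=
          mul_le_mul_of_nonneg_left hAe (pow_nonneg hc0 T)
      _ = c ^ T * Real.sqrt c * ‖e‖ := by ring
  -- assemble
  have hsecond : ‖(γ • S) w‖ ≤ Lg2 / (2 * μ) * ‖e‖ ^ 2 := by
    calc ‖(γ • S) w‖ ≤ (1 / μ) * ‖w‖ := hSnorm
      _ ≤ (1 / μ) * (Lg2 / 2 * ‖e‖ ^ 2) :=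
          mul_le_mul_of_nonneg_left hwbound (by positivity)
      _ = Lg2 / (2 * μ) * ‖e‖ ^ 2 := by ring
  calc ‖y - v T - ystar‖ = ‖(A ^ (T + 1)) e + (γ • S) w‖ := by
        rw [hu T, ContinuousLinearMap.smul_apply]
    _ ≤ ‖(A ^ (T + 1)) e‖ + ‖(γ • S) w‖ := norm_add_le _ _
    _ ≤ c ^ T * Real.sqrt c * ‖e‖ + Lg2 / (2 * μ) * ‖e‖ ^ 2 :=
        add_le_add hfirst hsecond
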